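/- arXiv:1604.04424 — 5 statements merged into one kernel-verified Lean document; each statement's English description precedes it below -/
import Mathlib

section
/- Let {a(k)} be a nonnegative real sequence and b, b1, b2, b3, b4 ≥ 0 with a(k+1) ≤ b1·a(k) + b2·∑_{i=1}^{k-1} b^{k-i}·a(i) + b3·b^k + b4 for all k ≥ 1. If 0 < b < 1, (1-b)(1-b1) > b·b2, and b4 = 0, then a(k) → 0 as k → ∞. -/
theorem stmt_1 (a : ℕ → ℝ) (b b1 b2 b3 b4 : ℝ)
    (ha : ∀ k, 0 ≤ a k)
    (hb : 0 ≤ b) (hb1 : 0 ≤ b1) (hb2 : 0 ≤ b2) (hb3 : 0 ≤ b3) (hb4 : 0 ≤ b4)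
    (hrec : ∀ k : ℕ, 1 ≤ k →
      a (k + 1) ≤ b1 * a k + b2 * ∑ i ∈ Finset.Ico 1 k, b ^ (k - i) * a i + b3 * b ^ k + b4)
    (hb0 : 0 < b) (hb1' : b < 1)
    (hgap : (1 - b) * (1 - b1) > b * b2) (hb4' : b4 = 0) :
    Filter.Tendsto a Filter.atTop (nhds 0) := by
  subst hb4'
  have h1b : 0 < 1 - b := by linarith
  have hbb2 : 0 ≤ b * b2 := mul_nonneg hb0.le hb2
  have hb1lt : b1 < 1 := by nlinarith
  set g := (1 - b) * (1 - b1) - b * b2 with hg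
  have hgpos : 0 < g := by simp only [hg]; linarith
  set δ := min (g / 2) (min ((1 - b) / 2) ((1 - b1) / 2)) with hδdef
  have hδpos : 0 < δ :=
    lt_min (by linarith) (lt_min (by linarith) (by linarith))
  have hδ1 : δ ≤ g / 2 := min_le_left _ _
  have hδ2 : δ ≤ (1 - b) / 2 := le_trans (min_le_right _ _) (min_le_left _ _)
  have hδ3 : δ ≤ (1 - b1) / 2 := le_trans (min_le_right _ _) (min_le_right _ _)
  set r := 1 - δ with hrdef
  have hbr : b < r := by simp only [hrdef]; linarith
  have hr1 : r < 1 := by simp only [hrdef]; linarith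
  have hr0 : 0 < r := lt_trans hb0 hbr
  have hrb : 0 < r - b := by linarith
  set q := b / (r - b) with hqdef
  have hq : q * (r - b) = b := div_mul_cancel₀ _ (ne_of_gt hrb)
  have hq0 : 0 ≤ q := div_nonneg hb0.le hrb.le
  have h5 : b1 * (r - b) + b * b2 + δ ^ 2 ≤ r * (r - b) := by
    simp only [hrdef]
    nlinarith [mul_nonneg hδpos.le hb, mul_nonneg hδpos.le hb1, hδ1]
  have hkey : b1 + b2 * q + δ ^ 2 ≤ r := by
    rw [← mul_le_mul_iff_of_pos_right hrb]
    have hq2 : b2 * q * (r - b) = b2 * b := by rw [mul_assoc, hq]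
    have hδsq : δ ^ 2 * (r - b) ≤ δ ^ 2 := by nlinarith [sq_nonneg δ]
    nlinarith [hq2, hδsq, h5]
  set C := max (a 1 / r) (b3 / δ ^ 2) with hCdef
  have hC0 : 0 ≤ C := le_trans (div_nonneg (ha 1) hr0.le) (le_max_left _ _)
  have hC1 : a 1 ≤ C * r := (div_le_iff₀ hr0).mp (le_max_left _ _)
  have hC2 : b3 ≤ C * δ ^ 2 := (div_le_iff₀ (by positivity)).mp (le_max_right _ _)
  clear_value C q r δ g
  -- geometric sum bound
  have sums : ∀ n : ℕ, ∑ i ∈ Finset.Ico 1 n, b ^ (n - i) * r ^ i ≤ r ^ n * q := by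
    intro n
    induction n with
    | zero => simp [hq0]
    | succ n ihn =>
      rcases Nat.eq_zero_or_pos n with h | h
      · subst h; simp; positivity
      · rw [Finset.sum_Ico_succ_top h]
        have hrw : ∑ i ∈ Finset.Ico 1 n, b ^ (n + 1 - i) * r ^ i
            = b * ∑ i ∈ Finset.Ico 1 n, b ^ (n - i) * r ^ i := by
          rw [Finset.mul_sum]
          refine Finset.sum_congr rfl fun i hi => ?_
          have hi' := Finset.mem_Ico.mp hi
          have : n + 1 - i = (n - i) + 1 := by omega
          rw [this, pow_succ]; ring
        rw [hrw]
        have hbS : b * ∑ i ∈ Finset.Ico 1 n, b ^ (n - i) * r ^ i ≤ b * (r ^ n * q) :=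
          mul_le_mul_of_nonneg_left ihn hb
        have hq' : r * q = b * q + b := by linear_combination hq
        have hrn : 0 ≤ r ^ n := pow_nonneg hr0.le n
        have : b * (r ^ n * q) + b ^ (n + 1 - n) * r ^ n = r ^ (n + 1) * q := by
          have hnn : n + 1 - n = 1 := by omega
          rw [hnn, pow_one, pow_succ]
          linear_combination (-(r ^ n)) * hq'
        linarith [hbS, this]
  -- main bound by strong induction
  have main : ∀ k, 1 ≤ k → a k ≤ C * r ^ k := by
    intro k
    induction k using Nat.strong_induction_on with
    | _ k ih =>
      intro hk
      rcases Nat.lt_or_ge k 2 with h2 | h2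
      · interval_cases k
        simpa using hC1
      · obtain ⟨n, rfl⟩ : ∃ n, k = n + 1 := ⟨k - 1, by omega⟩
        have hn : 1 ≤ n := by omega
        have hrecn := hrec n hn
        have hS : ∑ i ∈ Finset.Ico 1 n, b ^ (n - i) * a i ≤ C * (r ^ n * q) := by
          calc ∑ i ∈ Finset.Ico 1 n, b ^ (n - i) * a i
              ≤ ∑ i ∈ Finset.Ico 1 n, b ^ (n - i) * (C * r ^ i) := by
                refine Finset.sum_le_sum fun i hi => ?_
                have hi' := Finset.mem_Ico.mp hi
                exact mul_le_mul_of_nonneg_left (ih i (by omega) hi'.1) (pow_nonneg hb _)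
            _ = C * ∑ i ∈ Finset.Ico 1 n, b ^ (n - i) * r ^ i := by
                rw [Finset.mul_sum]
                exact Finset.sum_congr rfl fun i _ => by ring
            _ ≤ C * (r ^ n * q) := mul_le_mul_of_nonneg_left (sums n) hC0
        have han : a n ≤ C * r ^ n := ih n (by omega) hn
        have hbk : b ^ n ≤ r ^ n := pow_le_pow_left₀ hb hbr.le n
        have hrn : 0 ≤ r ^ n := pow_nonneg hr0.le n
        have hb3bound : b3 * b ^ n ≤ C * δ ^ 2 * r ^ n := by
          calc b3 * b ^ n ≤ b3 * r ^ n := mul_le_mul_of_nonneg_left hbk hb3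
            _ ≤ (C * δ ^ 2) * r ^ n := mul_le_mul_of_nonneg_right hC2 hrn
        have h1 : b1 * a n ≤ b1 * (C * r ^ n) := mul_le_mul_of_nonneg_left han hb1
        have h2 : b2 * (∑ i ∈ Finset.Ico 1 n, b ^ (n - i) * a i) ≤ b2 * (C * (r ^ n * q)) :=
          mul_le_mul_of_nonneg_left hS hb2
        have step : a (n + 1) ≤ C * r ^ n * (b1 + b2 * q + δ ^ 2) := by
          calc a (n + 1) ≤ b1 * a n + b2 * ∑ i ∈ Finset.Ico 1 n, b ^ (n - i) * a i
              + b3 * b ^ n + 0 := hrecn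
            _ ≤ b1 * (C * r ^ n) + b2 * (C * (r ^ n * q)) + C * δ ^ 2 * r ^ n + 0 := by
                linarith [h1, h2, hb3bound]
            _ = C * r ^ n * (b1 + b2 * q + δ ^ 2) := by ring
        have hfin : C * r ^ n * (b1 + b2 * q + δ ^ 2) ≤ C * r ^ n * r :=
          mul_le_mul_of_nonneg_left hkey (by positivity)
        calc a (n + 1) ≤ C * r ^ n * r := le_trans step hfin
          _ = C * r ^ (n + 1) := by rw [pow_succ]; ring
  have hlim : Filter.Tendsto (fun k : ℕ => C * r ^ k) Filter.atTop (nhds 0) := by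
    simpa using (tendsto_pow_atTop_nhds_zero_of_lt_one hr0.le hr1).const_mul C
  exact squeeze_zero' (Filter.Eventually.of_forall fun k => ha k)
    (Filter.eventually_atTop.mpr ⟨1, main⟩) hlim
end

section
/- Let {a(k)} be a nonnegative sequence with a(k+1) ≤ b1·a(k) + b2·∑_{i=1}^{k-1} b^{k-i}·a(i) + b3·b^k + b4 for all k ≥ 1, where b, b1, b2, b3, b4 ≥ 0, 0 < b < 1 and (1-b)(1-b1) > b·b2. Then the sequence {a(k)} is bounded above. -/
theorem stmt_2 (a : ℕ → ℝ) (b b1 b2 b3 b4 : ℝ)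
    (ha : ∀ k, 0 ≤ a k)
    (hb : 0 ≤ b) (hb1 : 0 ≤ b1) (hb2 : 0 ≤ b2) (hb3 : 0 ≤ b3) (hb4 : 0 ≤ b4)
    (hrec : ∀ k : ℕ, 1 ≤ k →
      a (k + 1) ≤ b1 * a k + b2 * ∑ i ∈ Finset.Ico 1 k, b ^ (k - i) * a i + b3 * b ^ k + b4)
    (hb0 : 0 < b) (hb1' : b < 1)
    (hgap : (1 - b) * (1 - b1) > b * b2) :
    ∃ M : ℝ, ∀ k, a k ≤ M := by
  have h1b : 0 < 1 - b := by linarith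
  have hg : 0 < (1 - b) * (1 - b1) - b * b2 := by linarith
  set g : ℝ := (1 - b) * (1 - b1) - b * b2 with hgdef
  set M : ℝ := max (max (a 0) (a 1)) ((b3 + b4) * (1 - b) / g) with hM
  have hM0 : a 0 ≤ M := le_trans (le_max_left _ _) (le_max_left _ _)
  have hM1 : a 1 ≤ M := le_trans (le_max_right _ _) (le_max_left _ _)
  have hMg : (b3 + b4) * (1 - b) / g ≤ M := le_max_right _ _
  have hMg' : (b3 + b4) * (1 - b) ≤ M * g := by
    rw [div_le_iff₀ hg] at hMg; linarith
  have hMnn : 0 ≤ M := le_trans (ha 0) hM0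
  refine ⟨M, ?_⟩
  have hgeom : ∀ n : ℕ, ∑ j ∈ Finset.range n, b ^ j ≤ 1 / (1 - b) := by
    intro n
    rw [geom_sum_eq (by linarith : b ≠ 1)]
    have hbn : 0 ≤ b ^ n := pow_nonneg hb n
    have h2 : (b ^ n - 1) / (b - 1) = (1 - b ^ n) / (1 - b) := by
      rw [show (1:ℝ) - b ^ n = -(b ^ n - 1) by ring,
        show (1:ℝ) - b = -(b - 1) by ring, neg_div_neg_eq]
    rw [h2]
    exact div_le_div₀ zero_le_one (by linarith) h1b le_rfl
  intro k
  induction k using Nat.strong_induction_on with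
  | _ k ih =>
    match k with
    | 0 => exact hM0
    | 1 => exact hM1
    | (n+2) =>
      have hrec' := hrec (n+1) (by omega)
      have hsum : ∑ i ∈ Finset.Ico 1 (n+1), b ^ (n+1 - i) * a i ≤ M * (b / (1 - b)) := by
        calc ∑ i ∈ Finset.Ico 1 (n+1), b ^ (n+1 - i) * a i
            ≤ ∑ i ∈ Finset.Ico 1 (n+1), b ^ (n+1 - i) * M := by
              apply Finset.sum_le_sum
              intro i hi
              exact mul_le_mul_of_nonneg_left (ih i (by simp [Finset.mem_Ico] at hi; omega))
                (pow_nonneg hb _)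
          _ = (∑ i ∈ Finset.Ico 1 (n+1), b ^ (n+1 - i)) * M := by rw [Finset.sum_mul]
          _ = (∑ j ∈ Finset.Ico 1 (n+1), b ^ j) * M := by
              congr 1
              refine Finset.sum_nbij' (fun i => n + 1 - i) (fun j => n + 1 - j) ?_ ?_ ?_ ?_ ?_ <;>
                intro i hi <;> simp [Finset.mem_Ico] at hi ⊢ <;> omega
          _ ≤ (b / (1 - b)) * M := by
              apply mul_le_mul_of_nonneg_right _ hMnn
              rw [Finset.sum_Ico_eq_sum_range]
              have : ∀ j, b ^ (1 + j) = b * b ^ j := fun j => by rw [pow_add]; ring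
              calc ∑ j ∈ Finset.range (n + 1 - 1), b ^ (1 + j)
                  = b * ∑ j ∈ Finset.range (n + 1 - 1), b ^ j := by
                    rw [Finset.mul_sum]; exact Finset.sum_congr rfl fun j _ => this j
                _ ≤ b * (1 / (1 - b)) := by
                    exact mul_le_mul_of_nonneg_left (hgeom _) hb
                _ = b / (1 - b) := by ring
          _ = M * (b / (1 - b)) := mul_comm _ _
      have hbk : b ^ (n + 1) ≤ 1 := pow_le_one₀ hb (le_of_lt hb1')
      have hstep : a (n + 2) ≤ b1 * M + b2 * (M * (b / (1 - b))) + b3 + b4 := by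
        have h1 : b1 * a (n+1) ≤ b1 * M :=
          mul_le_mul_of_nonneg_left (ih (n+1) (by omega)) hb1
        have h2 : b2 * ∑ i ∈ Finset.Ico 1 (n+1), b ^ (n+1-i) * a i
            ≤ b2 * (M * (b / (1 - b))) := mul_le_mul_of_nonneg_left hsum hb2
        have h3 : b3 * b ^ (n+1) ≤ b3 := by nlinarith
        linarith
      have hkey : b1 * M + b2 * (M * (b / (1 - b))) + b3 + b4 ≤ M := by
        have hq : b2 * (M * (b / (1 - b))) * (1 - b) = b2 * M * b := by
          field_simp
        nlinarith [mul_nonneg hb2 (mul_nonneg hMnn (div_nonneg hb (le_of_lt h1b)))]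
      linarith
end

section
/- Let A be an m×n real matrix satisfying the RIP of order t with constant δ_t < 1, and let μ > 0. For any vectors p, q ∈ ℝⁿ with |supp(p) ∪ supp(q)| ≤ t, one has |⟨p, (I − μAᵀA)q⟩| ≤ (|μ−1| + μδ_t)·‖p‖₂·‖q‖₂. -/
open Finset Matrix

/-- Euclidean norm of a finitely-indexed real vector. -/
noncomputable def nrm {ι : Type*} [Fintype ι] (x : ι → ℝ) : ℝ :=
  Real.sqrt (∑ i, x i ^ 2)

open Classical in
/-- Support of a vector as a finite set of indices. -/
noncomputable def spt {n : ℕ} (x : Fin n → ℝ) : Finset (Fin n) :=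
  Finset.univ.filter fun i => x i ≠ 0

/-- Restriction of a vector to an index set: keep entries in `U`, zero the rest. -/
def restr {n : ℕ} (x : Fin n → ℝ) (U : Finset (Fin n)) : Fin n → ℝ :=
  fun i => if i ∈ U then x i else 0

/-- `A` satisfies the RIP of order `t` with constant `δ`. -/
def RIP {m n : ℕ} (A : Matrix (Fin m) (Fin n) ℝ) (t : ℕ) (δ : ℝ) : Prop :=
  ∀ x : Fin n → ℝ, (spt x).card ≤ t →
    (1 - δ) * nrm x ^ 2 ≤ nrm (A.mulVec x) ^ 2 ∧
      nrm (A.mulVec x) ^ 2 ≤ (1 + δ) * nrm x ^ 2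

lemma nrm_nonneg {ι : Type*} [Fintype ι] (x : ι → ℝ) : 0 ≤ nrm x := Real.sqrt_nonneg _

lemma nrm_sq {ι : Type*} [Fintype ι] (x : ι → ℝ) : nrm x ^ 2 = x ⬝ᵥ x := by
  rw [nrm, Real.sq_sqrt (Finset.sum_nonneg fun i _ => sq_nonneg _)]
  simp [dotProduct, sq]

lemma nrm_eq_zero {ι : Type*} [Fintype ι] {x : ι → ℝ} (h : nrm x = 0) : x = 0 := by
  have h2 : x ⬝ᵥ x = 0 := by rw [← nrm_sq, h]; ring
  funext i
  have := (Finset.sum_eq_zero_iff_of_nonneg (fun j _ => mul_self_nonneg (x j))).1 h2 i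
    (Finset.mem_univ i)
  have := mul_self_eq_zero.1 this
  simpa using this

lemma spt_add {n : ℕ} (x y : Fin n → ℝ) : spt (x + y) ⊆ spt x ∪ spt y := by
  intro i hi
  simp only [spt, Finset.mem_filter, Finset.mem_union, Finset.mem_univ, true_and,
    Pi.add_apply] at *
  by_contra h
  push_neg at h
  rw [h.1, h.2] at hi
  simp at hi

lemma spt_sub {n : ℕ} (x y : Fin n → ℝ) : spt (x - y) ⊆ spt x ∪ spt y := by
  intro i hi
  simp only [spt, Finset.mem_filter, Finset.mem_union, Finset.mem_univ, true_and,
    Pi.sub_apply] at *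
  by_contra h
  push_neg at h
  rw [h.1, h.2] at hi
  simp at hi

lemma spt_smul {n : ℕ} (c : ℝ) (x : Fin n → ℝ) : spt (c • x) ⊆ spt x := by
  intro i hi
  simp only [spt, Finset.mem_filter, Finset.mem_univ, true_and, Pi.smul_apply,
    smul_eq_mul] at *
  exact fun h => hi (by rw [h, mul_zero])

lemma ip_bound {m n : ℕ} {A : Matrix (Fin m) (Fin n) ℝ} {t : ℕ} {δ : ℝ}
    (hRIP : RIP A t δ) (x y : Fin n → ℝ) (h : (spt x ∪ spt y).card ≤ t) :
    |(A *ᵥ x) ⬝ᵥ (A *ᵥ y) - x ⬝ᵥ y| ≤ δ * nrm x * nrm y := by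
  rcases eq_or_lt_of_le (nrm_nonneg x) with ha | ha
  · have hx : x = 0 := nrm_eq_zero ha.symm
    subst hx; simp [nrm, Matrix.mulVec_zero]
  rcases eq_or_lt_of_le (nrm_nonneg y) with hb | hb
  · have hy : y = 0 := nrm_eq_zero hb.symm
    subst hy; simp [nrm, Matrix.mulVec_zero]
  set a := nrm x with ha'
  set b := nrm y with hb'
  set u := b • x with hu
  set v := a • y with hv
  have hs1 : (spt (u + v)).card ≤ t :=
    le_trans (Finset.card_le_card ((spt_add u v).trans
      (Finset.union_subset_union (spt_smul _ _) (spt_smul _ _)))) h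
  have hs2 : (spt (u - v)).card ≤ t :=
    le_trans (Finset.card_le_card ((spt_sub u v).trans
      (Finset.union_subset_union (spt_smul _ _) (spt_smul _ _)))) h
  obtain ⟨h1, h2⟩ := hRIP (u + v) hs1
  obtain ⟨h3, h4⟩ := hRIP (u - v) hs2
  rw [nrm_sq, nrm_sq] at h1 h2 h3 h4
  simp only [hu, hv, Matrix.mulVec_add, Matrix.mulVec_sub, Matrix.mulVec_smul,
    dotProduct_add, add_dotProduct, dotProduct_sub, sub_dotProduct,
    dotProduct_smul, smul_dotProduct, smul_eq_mul] at h1 h2 h3 h4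
  have hcomm : (A *ᵥ y) ⬝ᵥ (A *ᵥ x) = (A *ᵥ x) ⬝ᵥ (A *ᵥ y) := dotProduct_comm _ _
  have hcomm2 : y ⬝ᵥ x = x ⬝ᵥ y := dotProduct_comm _ _
  have hxx : x ⬝ᵥ x = a ^ 2 := (nrm_sq x).symm
  have hyy : y ⬝ᵥ y = b ^ 2 := (nrm_sq y).symm
  rw [hcomm, hcomm2, hxx, hyy] at h1 h2 h3 h4
  have hab : 0 < a * b := mul_pos ha hb
  have key1 : 0 ≤ a * b * ((A *ᵥ x) ⬝ᵥ (A *ᵥ y) - x ⬝ᵥ y + δ * (a * b)) := by linarith [h1, h4]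
  have key2 : 0 ≤ a * b * (δ * (a * b) - ((A *ᵥ x) ⬝ᵥ (A *ᵥ y) - x ⬝ᵥ y)) := by linarith [h2, h3]
  rw [abs_le]
  constructor
  · nlinarith [key1, hab]
  · nlinarith [key2, hab]

lemma cs_bound {ι : Type*} [Fintype ι] (x y : ι → ℝ) : |x ⬝ᵥ y| ≤ nrm x * nrm y := by
  have h := Finset.sum_mul_sq_le_sq_mul_sq Finset.univ x y
  have h1 : (x ⬝ᵥ y) ^ 2 ≤ (nrm x * nrm y) ^ 2 := by
    rw [mul_pow, nrm_sq, nrm_sq]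
    simpa [dotProduct, sq] using h
  calc |x ⬝ᵥ y| = Real.sqrt ((x ⬝ᵥ y) ^ 2) := (Real.sqrt_sq_eq_abs _).symm
    _ ≤ Real.sqrt ((nrm x * nrm y) ^ 2) := Real.sqrt_le_sqrt h1
    _ = nrm x * nrm y := Real.sqrt_sq (mul_nonneg (nrm_nonneg x) (nrm_nonneg y))

theorem stmt_5 {m n : ℕ} (A : Matrix (Fin m) (Fin n) ℝ) (t : ℕ) (δ : ℝ)
    (hRIP : RIP A t δ) (hδ : δ < 1) (μ : ℝ) (hμ : 0 < μ)
    (p q : Fin n → ℝ) (hsupp : (spt p ∪ spt q).card ≤ t) :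
    abs (∑ i, p i * (q - μ • Matrix.mulVec Aᵀ (A.mulVec q)) i) ≤
      (|μ - 1| + μ * δ) * nrm p * nrm q := by
  have key : (∑ i, p i * (q - μ • Matrix.mulVec Aᵀ (A.mulVec q)) i) =
      (1 - μ) * (p ⬝ᵥ q) + μ * ((p ⬝ᵥ q) - (A *ᵥ p) ⬝ᵥ (A *ᵥ q)) := by
    have hAt : p ⬝ᵥ (Aᵀ *ᵥ (A *ᵥ q)) = (A *ᵥ p) ⬝ᵥ (A *ᵥ q) := by
      rw [Matrix.dotProduct_mulVec, Matrix.vecMul_transpose]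
    simp only [Pi.sub_apply, Pi.smul_apply, smul_eq_mul, mul_sub, Finset.sum_sub_distrib]
    rw [show (∑ i, p i * (μ * (Aᵀ *ᵥ (A *ᵥ q)) i)) = μ * (p ⬝ᵥ (Aᵀ *ᵥ (A *ᵥ q))) by
      rw [dotProduct, Finset.mul_sum]; congr 1; funext i; ring]
    rw [hAt]; simp [dotProduct]; ring
  rw [key]
  have hcs : |p ⬝ᵥ q| ≤ nrm p * nrm q := cs_bound p q
  have hip : |(A *ᵥ p) ⬝ᵥ (A *ᵥ q) - p ⬝ᵥ q| ≤ δ * nrm p * nrm q := ip_bound hRIP p q hsupp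
  calc |(1 - μ) * (p ⬝ᵥ q) + μ * ((p ⬝ᵥ q) - (A *ᵥ p) ⬝ᵥ (A *ᵥ q))|
      ≤ |(1 - μ) * (p ⬝ᵥ q)| + |μ * ((p ⬝ᵥ q) - (A *ᵥ p) ⬝ᵥ (A *ᵥ q))| := abs_add_le _ _
    _ ≤ |μ - 1| * (nrm p * nrm q) + μ * (δ * nrm p * nrm q) := by
        rw [abs_mul, abs_mul, abs_sub_comm 1 μ, abs_of_pos hμ,
          abs_sub_comm (p ⬝ᵥ q)]
        exact add_le_add (mul_le_mul_of_nonneg_left hcs (abs_nonneg _))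
          (mul_le_mul_of_nonneg_left hip hμ.le)
    _ = (|μ - 1| + μ * δ) * nrm p * nrm q := by ring
end

section
/- For τ > 0, β > 0 and a fixed vector w ∈ ℝⁿ, every vector of the form hard(w, √(2τ/β)) (setting entries with |w_i| ≤ √(2τ/β) to zero and keeping entries with |w_i| > √(2τ/β)) is a minimizer over x ∈ ℝⁿ of the function x ↦ ‖x‖₀ + (β/(2τ))‖x − w‖₂². -/
open Classical in
theorem stmt_15 {n : ℕ} (τ β : ℝ) (hτ : 0 < τ) (hβ : 0 < β) (w : Fin n → ℝ) :
    let θ : ℝ := Real.sqrt (2 * τ / β)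
    let hw : Fin n → ℝ := fun i => if θ < |w i| then w i else 0
    ∀ x : Fin n → ℝ,
      ((Finset.univ.filter fun i => hw i ≠ 0).card : ℝ)
          + (β / (2 * τ)) * ∑ i, (hw i - w i) ^ 2 ≤
        ((Finset.univ.filter fun i => x i ≠ 0).card : ℝ)
          + (β / (2 * τ)) * ∑ i, (x i - w i) ^ 2 := by
  intro θ hw x
  set c : ℝ := β / (2 * τ) with hc
  have hcpos : 0 < c := div_pos hβ (by linarith)
  have hθpos : 0 < θ := Real.sqrt_pos.mpr (div_pos (by linarith) hβ)
  have hθsq : θ ^ 2 = 2 * τ / β := Real.sq_sqrt (le_of_lt (div_pos (by linarith) hβ))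
  have hcθ : c * θ ^ 2 = 1 := by
    rw [hθsq, hc]; field_simp
  have key : ∀ (f : Fin n → ℝ),
      ((Finset.univ.filter fun i => f i ≠ 0).card : ℝ) + c * ∑ i, (f i - w i) ^ 2
      = ∑ i, ((if f i ≠ 0 then (1:ℝ) else 0) + c * (f i - w i) ^ 2) := by
    intro f
    rw [Finset.sum_add_distrib, ← Finset.mul_sum]
    congr 1
    rw [Finset.card_filter]
    push_cast
    rfl
  rw [key hw, key x]
  apply Finset.sum_le_sum
  intro i _
  by_cases h : θ < |w i|
  · have hwne : w i ≠ 0 := by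
      intro h0
      rw [h0] at h; simp at h; linarith
    simp only [hw, if_pos h, if_pos hwne, sub_self]
    by_cases hx : x i ≠ 0
    · simp only [if_pos hx]
      nlinarith [sq_nonneg (x i - w i), hcpos.le]
    · simp only [if_neg hx]
      push_neg at hx
      rw [hx]
      have : θ ^ 2 < (w i) ^ 2 := by nlinarith [abs_nonneg (w i), sq_abs (w i)]
      nlinarith
  · have hwe : hw i = 0 := by simp only [hw, if_neg h]
    push_neg at h
    have hle : (w i) ^ 2 ≤ θ ^ 2 := by nlinarith [sq_abs (w i), abs_nonneg (w i)]
    simp only [hwe, ne_eq, not_true_eq_false, if_false, zero_sub]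
    by_cases hx : x i ≠ 0
    · simp only [if_pos hx]
      have : c * (w i)^2 ≤ 1 := by nlinarith
      nlinarith [sq_nonneg (x i - w i)]
    · push_neg at hx
      simp [hx]
end

section
/- Let c : ℕ → ℝᵐ and r : ℕ → ℝᵐ satisfy r(1) = (γ/(1+γ))·c(0) and r(k+2) − (1/(1+γ))·r(k+1) = (γ/(1+γ))·(2c(k+1) − c(k)) for all k ≥ 0, where γ > 0. Then for all k ≥ 1, r(k+1) = (2γ/(1+γ))·c(k) + ∑_{i=1}^{k-1} (γ(1−γ)/(1+γ)^{k+1−i})·c(i) − (γ²/(1+γ)^{k+1})·c(0). -/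
theorem stmt_16 {m : ℕ} (γ : ℝ) (hγ : 0 < γ) (c r : ℕ → (Fin m → ℝ))
    (h1 : r 1 = (γ / (1 + γ)) • c 0)
    (hrec : ∀ k : ℕ, r (k + 2) - (1 / (1 + γ)) • r (k + 1) =
      (γ / (1 + γ)) • (2 • c (k + 1) - c k)) :
    ∀ k : ℕ, 1 ≤ k →
      r (k + 1) = (2 * γ / (1 + γ)) • c k
        + ∑ i ∈ Finset.Ico 1 k, (γ * (1 - γ) / (1 + γ) ^ (k + 1 - i)) • c i
        - (γ ^ 2 / (1 + γ) ^ (k + 1)) • c 0 := by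
  have hne : (1 + γ) ≠ 0 := by positivity
  intro k hk
  induction k, hk using Nat.le_induction with
  | base =>
    have h := eq_add_of_sub_eq (hrec 0)
    rw [h, h1, Finset.Ico_self, Finset.sum_empty]
    ext j
    simp only [Pi.add_apply, Pi.sub_apply, Pi.smul_apply, smul_eq_mul, Pi.ofNat_apply,
      add_zero]
    field_simp
    ring
  | succ k hk ih =>
    have h := eq_add_of_sub_eq (hrec k)
    rw [h, ih, Finset.sum_Ico_succ_top hk]
    have hsum : ∀ i ∈ Finset.Ico 1 k,
        (γ * (1 - γ) / (1 + γ) ^ (k + 1 + 1 - i)) • c i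
          = (1 / (1 + γ)) • ((γ * (1 - γ) / (1 + γ) ^ (k + 1 - i)) • c i) := by
      intro i hi
      have hik : i ≤ k := le_of_lt (Finset.mem_Ico.mp hi).2
      have : k + 1 + 1 - i = (k + 1 - i) + 1 := by omega
      rw [this, smul_smul, pow_succ]
      congr 1
      field_simp
    have htop : k + 1 + 1 - k = 2 := by omega
    rw [Finset.sum_congr rfl hsum, ← Finset.smul_sum, htop]
    set S := ∑ i ∈ Finset.Ico 1 k, (γ * (1 - γ) / (1 + γ) ^ (k + 1 - i)) • c i with hS
    ext j
    simp only [Pi.add_apply, Pi.sub_apply, Pi.smul_apply, smul_eq_mul, Pi.ofNat_apply]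
    field_simp
    ring
end
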